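/- For all integers n ≥ 2 and 1 ≤ k ≤ n−1, the 2-dimension of the poset M^n_{[0,k]} of multisets with elements in {1,…,n} and total size (with multiplicity) at most k, ordered by multiset inclusion, is strictly less than e·((π²/6)·k² + 2k·log k + 3k)·log n + k. -/

import Mathlib

set_option maxHeartbeats 1000000

open Finset

/-- The 2-dimension of a poset `P`: the least `d` such that there is an order
embedding of `P` into the powerset of `{1,…,d}` ordered by inclusion. -/
noncomputable def dim2 (P : Type*) [PartialOrder P] : ℕ :=
  sInf {d : ℕ | ∃ f : P → Finset (Fin d), ∀ a b : P, (f a ⊆ f b ↔ a ≤ b)}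

lemma dim2_le_card {P : Type*} [PartialOrder P] {ι : Type*} [Fintype ι] [DecidableEq ι]
    (f : P → Finset ι) (hf : ∀ a b, f a ⊆ f b ↔ a ≤ b) : dim2 P ≤ Fintype.card ι := by
  apply Nat.sInf_le
  refine ⟨fun a => (f a).image (Fintype.equivFin ι), fun a b => ?_⟩
  rw [Finset.image_subset_image_iff (Fintype.equivFin ι).injective]
  exact hf a b

lemma sum_choose_le (a m : ℕ) : ∑ s ∈ Finset.range (m + 1), a.choose s ≤ (a + 1) ^ m := by
  induction m with
  | zero => simp
  | succ m ih =>
    rw [Finset.sum_range_succ, pow_succ]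
    have h1 : a.choose (m + 1) ≤ a ^ (m + 1) := Nat.choose_le_pow a (m + 1)
    have h2 : a ^ (m + 1) ≤ a * (a + 1) ^ m := by
      rw [pow_succ, mul_comm]
      exact Nat.mul_le_mul_left a (Nat.pow_le_pow_left (Nat.le_succ a) m)
    calc ∑ s ∈ Finset.range (m + 1), a.choose s + a.choose (m + 1)
        ≤ (a + 1) ^ m + a * (a + 1) ^ m := Nat.add_le_add ih (h1.trans h2)
      _ = (a + 1) ^ m * (a + 1) := by ring

lemma card_small_powerset {α : Type*} [DecidableEq α] (A : Finset α) (m : ℕ) :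
    (A.powerset.filter fun T => T.card ≤ m).card ≤ (A.card + 1) ^ m := by
  have heq : A.powerset.filter (fun T => T.card ≤ m)
      = (Finset.range (m + 1)).biUnion fun s => A.powersetCard s := by
    ext T
    simp only [mem_filter, mem_powerset, mem_biUnion, mem_range, mem_powersetCard,
      Nat.lt_succ_iff]
    constructor
    · rintro ⟨h1, h2⟩; exact ⟨T.card, h2, h1, rfl⟩
    · rintro ⟨s, hs, h1, rfl⟩; exact ⟨h1, hs⟩
  rw [heq, Finset.card_biUnion]
  · calc ∑ s ∈ Finset.range (m + 1), (A.powersetCard s).card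
        = ∑ s ∈ Finset.range (m + 1), A.card.choose s := by
          refine Finset.sum_congr rfl fun s _ => ?_
          rw [Finset.card_powersetCard]
      _ ≤ (A.card + 1) ^ m := sum_choose_le A.card m
  · intro x _ y _ hxy
    exact A.pairwise_disjoint_powersetCard hxy

lemma card_filter_fin_lt (s c : ℕ) (h : c ≤ s) :
    ((univ : Finset (Fin s)).filter fun v : Fin s => (v : ℕ) < c).card = c := by
  rw [← Finset.card_image_of_injective _ Fin.val_injective]
  have h1 : (((univ : Finset (Fin s)).filter fun v : Fin s => (v : ℕ) < c).image Fin.val)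
      = Finset.range c := by
    ext x
    simp only [mem_image, mem_filter, mem_univ, true_and, mem_range]
    constructor
    · rintro ⟨v, hv, rfl⟩; exact hv
    · intro hx; exact ⟨⟨x, lt_of_lt_of_le hx h⟩, hx, rfl⟩
  rw [h1, Finset.card_range]

lemma card_filter_fin_ge (s c : ℕ) (h : c ≤ s) :
    ((univ : Finset (Fin s)).filter fun v : Fin s => c ≤ (v : ℕ)).card = s - c := by
  have := Finset.card_filter_add_card_filter_not
    (s := (univ : Finset (Fin s))) (p := fun v : Fin s => (v : ℕ) < c)
  simp only [not_lt] at this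
  rw [card_filter_fin_lt s c h] at this
  have hcard : (univ : Finset (Fin s)).card = s := by simp
  omega

lemma exists_good_family (n k c : ℕ) (hn : 2 ≤ n) (hc1 : 1 ≤ c) (hck : c ≤ k)
    (hkn : k ≤ n - 1) :
    ∃ r : ℕ, (r : ℝ) ≤ Real.exp 1 * ((k : ℝ) / c + 1) ^ 2 * Real.log n + 1 ∧
      ∃ g : Fin r → (Fin n → Fin (k + c)),
        ∀ i : Fin n, ∀ T : Finset (Fin n), i ∉ T → T.card ≤ k / c →
          ∃ j, (g j i : ℕ) < c ∧ ∀ x ∈ T, c ≤ (g j x : ℕ) := by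
  classical
  set m := k / c with hm
  set s := k + c with hs
  have hcs : c ≤ s := by omega
  have hspos : 0 < s := by omega
  have hmk : m ≤ k := Nat.div_le_self k c
  have hmn : m + 1 ≤ n := by omega
  have hn1 : (1 : ℝ) < (n : ℝ) := by exact_mod_cast hn.trans_lt' one_lt_two
  have hlogn : 0 < Real.log n := Real.log_pos hn1
  have hkc0 : (0:ℝ) ≤ (k : ℝ) / c := by positivity
  set E : ℝ := Real.exp 1 * ((k : ℝ) / c + 1) ^ 2 * Real.log n with hE
  have hE0 : 0 < E := by
    apply mul_pos (mul_pos (Real.exp_pos 1) (by positivity)) hlogn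
  set r := ⌈E⌉₊ with hr
  have hr1 : 1 ≤ r := Nat.one_le_ceil_iff.mpr hE0
  have hrE : (r : ℝ) ≤ E + 1 := le_of_lt (Nat.ceil_lt_add_one hE0.le)
  have hrE' : E ≤ r := Nat.le_ceil E
  clear_value E r
  refine ⟨r, hrE, ?_⟩
  -- the good set of samples for an event (i, T)
  set A : Fin n → Finset (Fin n) → Fin n → Finset (Fin s) := fun i T x =>
    if x = i then (univ.filter fun v : Fin s => (v : ℕ) < c)
    else if x ∈ T then (univ.filter fun v : Fin s => c ≤ (v : ℕ)) else univ with hA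
  set Good : Fin n → Finset (Fin n) → Finset (Fin n → Fin s) :=
    fun i T => Fintype.piFinset (A i T) with hGoodDef
  have hGood : ∀ (i : Fin n) (T : Finset (Fin n)), i ∉ T →
      (Good i T).card = c * k ^ T.card * s ^ (n - 1 - T.card) := by
    intro i T hiT
    rw [hGoodDef]
    rw [Fintype.card_piFinset]
    have hAi : ∀ x, (A i T x).card = if x = i then c else if x ∈ T then k else s := by
      intro x
      by_cases h1 : x = i
      · simp only [hA, h1, if_pos rfl, if_true]
        exact card_filter_fin_lt s c hcs
      · by_cases h2 : x ∈ T
        · simp only [hA, if_neg h1, if_pos h2]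
          rw [card_filter_fin_ge s c hcs]; omega
        · simp only [hA, if_neg h1, if_neg h2]
          simp
    calc (∏ x, (A i T x).card)
        = ∏ x, (if x = i then c else if x ∈ T then k else s) :=
          Finset.prod_congr rfl fun x _ => hAi x
      _ = c * k ^ T.card * s ^ (n - 1 - T.card) := by
          rw [← Finset.mul_prod_erase univ _ (mem_univ i), if_pos rfl]
          have h2 : ∀ x ∈ univ.erase i,
              (if x = i then c else if x ∈ T then k else s) = (if x ∈ T then k else s) := by
            intro x hx
            rw [if_neg (Finset.ne_of_mem_erase hx)]
          rw [Finset.prod_congr rfl h2,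
            ← Finset.prod_filter_mul_prod_filter_not (univ.erase i) (· ∈ T)]
          have hfT : (univ.erase i).filter (· ∈ T) = T := by
            ext x
            simp only [mem_filter, mem_erase, mem_univ, true_and, and_true]
            constructor
            · rintro ⟨_, h⟩; exact h
            · intro h; exact ⟨ne_of_mem_of_not_mem h hiT, h⟩
          have hcard2 : ((univ.erase i).filter (fun x => ¬ x ∈ T)).card = n - 1 - T.card := by
            have := Finset.card_filter_add_card_filter_not
              (s := univ.erase i) (p := (· ∈ T))
            rw [hfT] at this
            have hce : (univ.erase i).card = n - 1 := by
              rw [Finset.card_erase_of_mem (mem_univ i)]; simp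
            omega
          have e1 : (∏ x ∈ (univ.erase i).filter (· ∈ T), if x ∈ T then k else s)
              = k ^ T.card := by
            rw [hfT]
            rw [Finset.prod_congr rfl fun x hx => if_pos hx, Finset.prod_const]
          have e2 : (∏ x ∈ (univ.erase i).filter (fun x => ¬ x ∈ T), if x ∈ T then k else s)
              = s ^ (n - 1 - T.card) := by
            rw [Finset.prod_congr rfl fun x hx => if_neg (mem_filter.mp hx).2,
              Finset.prod_const, hcard2]
          rw [e1, e2]
          ring
  -- events
  set 𝓔 : Finset (Fin n × Finset (Fin n)) :=
    univ.filter (fun p => p.1 ∉ p.2 ∧ p.2.card ≤ m) with hEv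
  set Gm : ℕ := c * k ^ m * s ^ (n - 1 - m) with hGm
  set N : ℕ := s ^ n with hN
  have hGmle : ∀ p ∈ 𝓔, Gm ≤ (Good p.1 p.2).card := by
    rintro ⟨i, T⟩ hp
    simp only [hEv, mem_filter, mem_univ, true_and] at hp
    obtain ⟨hiT, hTm⟩ := hp
    rw [hGood i T hiT]
    set t := T.card with ht
    have h1 : k ^ m = k ^ t * k ^ (m - t) := by rw [← pow_add]; congr 1; omega
    have h2 : s ^ (n - 1 - t) = s ^ (m - t) * s ^ (n - 1 - m) := by
      rw [← pow_add]; congr 1; omega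
    have h3 : k ^ (m - t) ≤ s ^ (m - t) := Nat.pow_le_pow_left (by omega) _
    calc c * k ^ m * s ^ (n - 1 - m)
        = c * k ^ t * (k ^ (m - t) * s ^ (n - 1 - m)) := by rw [h1]; ring
      _ ≤ c * k ^ t * (s ^ (m - t) * s ^ (n - 1 - m)) :=
          Nat.mul_le_mul_left _ (Nat.mul_le_mul_right _ h3)
      _ = c * k ^ t * s ^ (n - 1 - t) := by rw [h2]
  have hGN : Gm ≤ N := by
    calc Gm = c * k ^ m * s ^ (n - 1 - m) := rfl
      _ ≤ s * s ^ m * s ^ (n - 1 - m) :=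
          Nat.mul_le_mul (Nat.mul_le_mul (by omega) (Nat.pow_le_pow_left (by omega) m)) le_rfl
      _ = s ^ (1 + m + (n - 1 - m)) := by rw [pow_add, pow_add, pow_one]
      _ = N := by rw [hN]; congr 1; omega
  have hcardOmega : Fintype.card (Fin n → Fin s) = N := by
    simp [hN, Fintype.card_fun]
  set Bad : Finset (Fin r → Fin n → Fin s) :=
    univ.filter (fun gs => ∃ p : Fin n × Finset (Fin n), p ∈ 𝓔 ∧ ∀ j, gs j ∉ Good p.1 p.2)
    with hBad
  have hBadcard : Bad.card ≤ 𝓔.card * (N - Gm) ^ r := by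
    have hBadsub : Bad ⊆ 𝓔.biUnion
        (fun p => Fintype.piFinset fun _ : Fin r =>
          ((univ : Finset (Fin n → Fin s)) \ Good p.1 p.2)) := by
      intro gs hgs
      simp only [hBad, mem_filter, mem_univ, true_and] at hgs
      obtain ⟨p, hp, hbad⟩ := hgs
      refine mem_biUnion.mpr ⟨p, hp, ?_⟩
      rw [Fintype.mem_piFinset]
      intro j
      exact mem_sdiff.mpr ⟨mem_univ _, hbad j⟩
    calc Bad.card
        ≤ ∑ p ∈ 𝓔, (Fintype.piFinset fun _ : Fin r =>
            ((univ : Finset (Fin n → Fin s)) \ Good p.1 p.2)).card :=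
          (card_le_card hBadsub).trans Finset.card_biUnion_le
      _ ≤ ∑ _p ∈ 𝓔, (N - Gm) ^ r := by
          refine Finset.sum_le_sum fun p hp => ?_
          rw [Fintype.card_piFinset]
          have hc1' : ((univ : Finset (Fin n → Fin s)) \ Good p.1 p.2).card
              = N - (Good p.1 p.2).card := by
            rw [Finset.card_sdiff_of_subset (subset_univ _), card_univ, hcardOmega]
          rw [Finset.prod_const, card_univ, Fintype.card_fin, hc1']
          exact Nat.pow_le_pow_left (Nat.sub_le_sub_left (hGmle p hp) N) r
      _ = 𝓔.card * (N - Gm) ^ r := by rw [Finset.sum_const, smul_eq_mul]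
  have hEcard : 𝓔.card ≤ n ^ (m + 1) := by
    have hsub : 𝓔 ⊆ univ.biUnion (fun i : Fin n =>
        {i} ×ˢ ((univ.erase i).powerset.filter fun T => T.card ≤ m)) := by
      rintro ⟨i, T⟩ hp
      simp only [hEv, mem_filter, mem_univ, true_and] at hp
      obtain ⟨hiT, hTm⟩ := hp
      refine mem_biUnion.mpr ⟨i, mem_univ _, ?_⟩
      rw [Finset.mem_product]
      refine ⟨mem_singleton_self i, mem_filter.mpr ⟨mem_powerset.mpr ?_, hTm⟩⟩
      intro x hx
      exact mem_erase.mpr ⟨ne_of_mem_of_not_mem hx hiT, mem_univ _⟩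
    calc 𝓔.card
        ≤ ∑ i : Fin n, ({i} ×ˢ ((univ.erase i).powerset.filter fun T => T.card ≤ m)).card :=
          (card_le_card hsub).trans Finset.card_biUnion_le
      _ ≤ ∑ _i : Fin n, n ^ m := by
          refine Finset.sum_le_sum fun i _ => ?_
          rw [Finset.card_product, Finset.card_singleton, one_mul]
          have h1 := card_small_powerset (univ.erase i) m
          have hce : (univ.erase i).card = n - 1 := by
            rw [Finset.card_erase_of_mem (mem_univ i)]; simp
          rw [hce] at h1
          have h2 : n - 1 + 1 = n := by omega
          rwa [h2] at h1
      _ = n * n ^ m := by rw [Finset.sum_const, card_univ, Fintype.card_fin, smul_eq_mul]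
      _ = n ^ (m + 1) := by rw [pow_succ]; ring
  clear_value A Good 𝓔 Gm N Bad
  -- real analysis
  have hkR : (0:ℝ) < (k:ℝ) := by exact_mod_cast (hc1.trans hck)
  have hcR : (0:ℝ) < (c:ℝ) := by exact_mod_cast hc1
  have hsR : (0:ℝ) < (s:ℝ) := by exact_mod_cast hspos
  have hNposn : 0 < N := by rw [hN]; exact pow_pos hspos n
  have hNpos : (0:ℝ) < (N:ℝ) := by exact_mod_cast hNposn
  set q : ℝ := (Gm : ℝ) / (N : ℝ) with hq
  clear_value q
  have hGmpos : 0 < Gm := by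
    rw [hGm]
    exact Nat.mul_pos (Nat.mul_pos (by omega) (pow_pos (by omega) m))
      (pow_pos hspos _)
  have hq0 : 0 < q := by
    rw [hq]
    exact div_pos (by exact_mod_cast hGmpos) hNpos
  have hq1 : q ≤ 1 := by
    rw [hq, div_le_one hNpos]
    exact_mod_cast hGN
  have hNfact : (N:ℝ) = (s:ℝ) ^ (m + 1) * (s:ℝ) ^ (n - 1 - m) := by
    rw [hN]; push_cast; rw [← pow_add]; congr 1; omega
  have hGmR : (Gm:ℝ) = (c:ℝ) * (k:ℝ) ^ m * (s:ℝ) ^ (n - 1 - m) := by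
    rw [hGm]; push_cast; ring
  have hqeq : q = (c:ℝ) * (k:ℝ) ^ m / (s:ℝ) ^ (m + 1) := by
    rw [hq, hGmR, hNfact]
    rw [mul_div_mul_right _ _ (by positivity : ((s:ℝ) ^ (n - 1 - m)) ≠ 0)]
  have hsk : (s:ℝ) ^ m ≤ Real.exp 1 * (k:ℝ) ^ m := by
    have h1 : (s:ℝ) ≤ (k:ℝ) * Real.exp ((c:ℝ) / (k:ℝ)) := by
      have h2 := Real.add_one_le_exp ((c:ℝ) / (k:ℝ))
      have h3 : (s:ℝ) = (k:ℝ) * ((c:ℝ) / (k:ℝ) + 1) := by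
        field_simp [hs]
        push_cast [hs]
        ring
      rw [h3]
      exact mul_le_mul_of_nonneg_left h2 hkR.le
    calc (s:ℝ) ^ m ≤ ((k:ℝ) * Real.exp ((c:ℝ) / (k:ℝ))) ^ m :=
          pow_le_pow_left₀ hsR.le h1 m
      _ = (k:ℝ) ^ m * Real.exp ((c:ℝ) / (k:ℝ)) ^ m := mul_pow _ _ _
      _ = (k:ℝ) ^ m * Real.exp ((m:ℝ) * ((c:ℝ) / (k:ℝ))) := by rw [Real.exp_nat_mul]
      _ ≤ (k:ℝ) ^ m * Real.exp 1 := by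
          have hmc : (m:ℝ) * ((c:ℝ) / (k:ℝ)) ≤ 1 := by
            rw [mul_div_assoc'] at *
            rw [div_le_one hkR]
            exact_mod_cast Nat.div_mul_le_self k c
          exact mul_le_mul_of_nonneg_left (Real.exp_le_exp.mpr hmc) (by positivity)
      _ = Real.exp 1 * (k:ℝ) ^ m := mul_comm _ _
  have hq_lb : (c:ℝ) / (Real.exp 1 * (s:ℝ)) ≤ q := by
    rw [hqeq, div_le_div_iff₀ (by positivity) (by positivity)]
    have hss : (s:ℝ) ^ (m + 1) = (s:ℝ) ^ m * s := pow_succ _ _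
    rw [hss]
    have h5 := mul_le_mul_of_nonneg_left hsk (by positivity : (0:ℝ) ≤ (c:ℝ) * s)
    nlinarith [h5]
  have hsR' : (s:ℝ) = (k:ℝ) + (c:ℝ) := by rw [hs]; push_cast; ring
  have hscR : (k:ℝ) / (c:ℝ) + 1 = (s:ℝ) / (c:ℝ) := by
    rw [hsR']
    field_simp
  have hqr : ((m:ℝ) + 1) * Real.log n ≤ q * r := by
    have h1 : (c:ℝ) / (Real.exp 1 * s) * E = ((s:ℝ) / (c:ℝ)) * Real.log n := by
      rw [hE, hscR]
      field_simp
    have h2 : ((m:ℝ) + 1) ≤ (s:ℝ) / (c:ℝ) := by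
      rw [← hscR]
      have := Nat.cast_div_le (m := k) (n := c) (α := ℝ)
      linarith [this]
    calc ((m:ℝ) + 1) * Real.log n ≤ ((s:ℝ) / (c:ℝ)) * Real.log n :=
          mul_le_mul_of_nonneg_right h2 hlogn.le
      _ = (c:ℝ) / (Real.exp 1 * s) * E := h1.symm
      _ ≤ q * E := mul_le_mul_of_nonneg_right hq_lb hE0.le
      _ ≤ q * r := mul_le_mul_of_nonneg_left hrE' hq0.le
  have hmain : (Bad.card : ℝ) < (N:ℝ) ^ r := by
    have hBC : (Bad.card : ℝ) ≤ (𝓔.card : ℝ) * ((N - Gm : ℕ) : ℝ) ^ r := by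
      exact_mod_cast hBadcard
    rcases Nat.eq_zero_or_pos 𝓔.card with h0 | hposE
    · calc (Bad.card : ℝ) ≤ (𝓔.card : ℝ) * ((N - Gm : ℕ) : ℝ) ^ r := hBC
        _ = 0 := by rw [h0]; simp
        _ < (N:ℝ) ^ r := by positivity
    · have hE1 : (1:ℝ) ≤ (𝓔.card : ℝ) := by exact_mod_cast hposE
      have hsubR : ((N - Gm : ℕ) : ℝ) = (N:ℝ) - (Gm:ℝ) := by
        rw [Nat.cast_sub hGN]
      have h1q : (N:ℝ) - (Gm:ℝ) = (1 - q) * N := by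
        rw [hq]; field_simp
      have hstep1 : ((N:ℝ) - Gm) ^ r < Real.exp (-(q * r)) * (N:ℝ) ^ r := by
        rw [h1q, mul_pow]
        have h2 : (1 - q) ^ r < Real.exp (-q) ^ r := by
          have h4 := Real.add_one_lt_exp (x := -q) (by intro hq'; rw [neg_eq_zero] at hq'; exact hq0.ne' hq')
          have h5 : (1 - q) < Real.exp (-q) := by linarith
          exact pow_lt_pow_left₀ h5 (by linarith) (Nat.one_le_iff_ne_zero.mp hr1)
        have h3 : Real.exp (-q) ^ r = Real.exp (-(q * r)) := by
          rw [← Real.exp_nat_mul]; ring_nf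
        calc (1 - q) ^ r * (N:ℝ) ^ r < Real.exp (-q) ^ r * (N:ℝ) ^ r :=
              mul_lt_mul_of_pos_right h2 (by positivity)
          _ = Real.exp (-(q * r)) * (N:ℝ) ^ r := by rw [h3]
      have hstep2 : (𝓔.card : ℝ) * Real.exp (-(q * r)) ≤ 1 := by
        have hlogE : Real.log (𝓔.card : ℝ) ≤ ((m:ℝ) + 1) * Real.log n := by
          calc Real.log (𝓔.card : ℝ) ≤ Real.log ((n ^ (m + 1) : ℕ) : ℝ) :=
                Real.log_le_log (by linarith) (by exact_mod_cast hEcard)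
            _ = ((m:ℝ) + 1) * Real.log n := by
                push_cast
                rw [Real.log_pow]
                push_cast
                ring
        have hEexp : (𝓔.card : ℝ) ≤ Real.exp (q * r) := by
          calc (𝓔.card : ℝ) = Real.exp (Real.log (𝓔.card : ℝ)) :=
                (Real.exp_log (by linarith)).symm
            _ ≤ Real.exp (q * r) := Real.exp_le_exp.mpr (hlogE.trans hqr)
        calc (𝓔.card : ℝ) * Real.exp (-(q * r))
            ≤ Real.exp (q * r) * Real.exp (-(q * r)) :=
              mul_le_mul_of_nonneg_right hEexp (Real.exp_pos _).le
          _ = 1 := by rw [← Real.exp_add, add_neg_cancel, Real.exp_zero]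
      calc (Bad.card : ℝ) ≤ (𝓔.card : ℝ) * ((N - Gm : ℕ) : ℝ) ^ r := hBC
        _ = (𝓔.card : ℝ) * ((N:ℝ) - Gm) ^ r := by rw [hsubR]
        _ < (𝓔.card : ℝ) * (Real.exp (-(q * r)) * (N:ℝ) ^ r) :=
            mul_lt_mul_of_pos_left hstep1 (lt_of_lt_of_le one_pos hE1)
        _ = ((𝓔.card : ℝ) * Real.exp (-(q * r))) * (N:ℝ) ^ r := by ring
        _ ≤ 1 * (N:ℝ) ^ r := mul_le_mul_of_nonneg_right hstep2 (by positivity)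
        _ = (N:ℝ) ^ r := one_mul _
  have hBadlt : Bad.card < Fintype.card (Fin r → Fin n → Fin s) := by
    have h1 : Fintype.card (Fin r → Fin n → Fin s) = N ^ r := by
      rw [Fintype.card_fun, hcardOmega, Fintype.card_fin]
    rw [h1]
    exact_mod_cast hmain
  obtain ⟨gs, hgs⟩ : ∃ gs, gs ∉ Bad := by
    by_contra h
    push_neg at h
    have heq : Bad = univ := eq_univ_iff_forall.mpr h
    rw [heq, card_univ] at hBadlt
    exact lt_irrefl _ hBadlt
  refine ⟨gs, ?_⟩
  intro i T hiT hTm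
  simp only [hBad, mem_filter, mem_univ, true_and] at hgs
  push_neg at hgs
  obtain ⟨j, hj⟩ := hgs ⟨i, T⟩ (by
    simp only [hEv, mem_filter, mem_univ, true_and]
    exact ⟨hiT, hTm⟩)
  have hj' : gs j ∈ Fintype.piFinset (A i T) := by
    rw [hGoodDef] at hj
    exact hj
  refine ⟨j, ?_, ?_⟩
  · have h1 := (Fintype.mem_piFinset.mp hj') i
    simp only [hA, if_pos rfl] at h1
    exact (mem_filter.mp h1).2
  · intro x hx
    have h1 := (Fintype.mem_piFinset.mp hj') x
    have hxi : x ≠ i := ne_of_mem_of_not_mem hx hiT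
    simp only [hA, if_neg hxi, if_pos hx] at h1
    exact (mem_filter.mp h1).2

lemma sum_count_univ {n : ℕ} (M : Multiset (Fin n)) :
    ∑ x : Fin n, M.count x = Multiset.card M := by
  rw [← Multiset.toFinset_sum_count_eq M]
  exact (Finset.sum_subset (subset_univ _) (fun x _ hx =>
    Multiset.count_eq_zero.mpr (fun h => hx (Multiset.mem_toFinset.mpr h)))).symm

/-- For `n ≥ 2` and `1 ≤ k ≤ n - 1`,
`dim₂(M^n_{[0,k]}) < e (π²/6 k² + 2k log k + 3k) log n + k`, where `M^n_{[0,k]}` is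
the poset of multisets with elements in `{1,…,n}` of total size at most `k`,
ordered by multiset inclusion. -/
theorem dim2_multiset_lt (n k : ℕ) (hn : 2 ≤ n) (hk1 : 1 ≤ k) (hk2 : k ≤ n - 1) :
    (dim2 {M : Multiset (Fin n) // Multiset.card M ≤ k} : ℝ)
      < Real.exp 1 * (Real.pi ^ 2 / 6 * (k : ℝ) ^ 2 + 2 * k * Real.log k + 3 * k)
          * Real.log n + k := by
  classical
  have hn1 : (1 : ℝ) < (n : ℝ) := by exact_mod_cast hn.trans_lt' one_lt_two
  have hlogn : 0 < Real.log n := Real.log_pos hn1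
  have hkR : (0:ℝ) < (k:ℝ) := by exact_mod_cast hk1
  have H : ∀ c ∈ Finset.Icc 1 k, ∃ r : ℕ,
      (r : ℝ) ≤ Real.exp 1 * ((k : ℝ) / c + 1) ^ 2 * Real.log n + 1 ∧
      ∃ g : Fin r → (Fin n → Fin (k + c)),
        ∀ i : Fin n, ∀ T : Finset (Fin n), i ∉ T → T.card ≤ k / c →
          ∃ j, (g j i : ℕ) < c ∧ ∀ x ∈ T, c ≤ (g j x : ℕ) := by
    intro c hc
    rw [Finset.mem_Icc] at hc
    exact exists_good_family n k c hn hc.1 hc.2 hk2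
  choose r hr g hg using H
  set ι := (c : {c // c ∈ Finset.Icc 1 k}) × Fin (r c.1 c.2) with hι
  set P := {M : Multiset (Fin n) // Multiset.card M ≤ k} with hP
  set f : P → Finset ι := fun M =>
    univ.filter (fun p =>
      ∃ i : Fin n, (g p.1.1 p.1.2 p.2 i : ℕ) < p.1.1 ∧ (p.1.1 : ℕ) ≤ M.1.count i)
    with hf
  have hresp : ∀ a b : P, f a ⊆ f b ↔ a ≤ b := by
    intro a b
    constructor
    · intro hsub
      by_contra hab
      have hab' : ¬ (a.1 ≤ b.1) := fun h => hab (Subtype.coe_le_coe.mp h)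
      rw [Multiset.le_iff_count] at hab'
      push_neg at hab'
      obtain ⟨i, hi⟩ := hab'
      set c := a.1.count i with hc
      have hc1 : 1 ≤ c := by omega
      have hck : c ≤ k := le_trans (Multiset.count_le_card i a.1) a.2
      have hmem : c ∈ Finset.Icc 1 k := Finset.mem_Icc.mpr ⟨hc1, hck⟩
      set T : Finset (Fin n) := univ.filter (fun x => x ≠ i ∧ c ≤ b.1.count x) with hT
      have hiT : i ∉ T := by simp [hT]
      have hTcard : T.card ≤ k / c := by
        rw [Nat.le_div_iff_mul_le (by omega : 0 < c)]
        calc T.card * c = ∑ _x ∈ T, c := by rw [Finset.sum_const, smul_eq_mul]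
          _ ≤ ∑ x ∈ T, b.1.count x := Finset.sum_le_sum
              (fun x hx => ((mem_filter.mp hx).2).2)
          _ ≤ ∑ x : Fin n, b.1.count x := Finset.sum_le_sum_of_subset (subset_univ T)
          _ = Multiset.card b.1 := sum_count_univ b.1
          _ ≤ k := b.2
      obtain ⟨j, hj1, hj2⟩ := hg c hmem i T hiT hTcard
      have hmema : (⟨⟨c, hmem⟩, j⟩ : ι) ∈ f a := by
        rw [hf]
        simp only [mem_filter, mem_univ, true_and]
        exact ⟨i, hj1, le_refl c⟩
      have hmemb := hsub hmema
      rw [hf] at hmemb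
      simp only [mem_filter, mem_univ, true_and] at hmemb
      obtain ⟨i', h1, h2⟩ := hmemb
      by_cases hii : i' = i
      · rw [hii] at h2; omega
      · have hiT' : i' ∈ T := mem_filter.mpr ⟨mem_univ _, hii, h2⟩
        exact absurd h1 (not_lt.mpr (hj2 i' hiT'))
    · intro hab
      rw [hf]
      intro p hp
      simp only [mem_filter, mem_univ, true_and] at hp ⊢
      obtain ⟨i, h1, h2⟩ := hp
      exact ⟨i, h1, le_trans h2 (Multiset.count_le_of_le i (Subtype.coe_le_coe.mpr hab))⟩
  have hdim := dim2_le_card f hresp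
  have hcard : Fintype.card ι = ∑ x ∈ (Finset.Icc 1 k).attach, r x.1 x.2 := by
    simp only [hι]
    rw [Fintype.card_sigma, Finset.univ_eq_attach]
    exact Finset.sum_congr rfl fun x _ => Fintype.card_fin _
  have hsum : (Fintype.card ι : ℝ)
      ≤ ∑ c ∈ Finset.Icc 1 k, (Real.exp 1 * ((k:ℝ)/c + 1)^2 * Real.log n + 1) := by
    rw [hcard]
    push_cast
    calc ∑ x ∈ (Finset.Icc 1 k).attach, (r x.1 x.2 : ℝ)
        ≤ ∑ x ∈ (Finset.Icc 1 k).attach,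
            (Real.exp 1 * ((k:ℝ)/(x.1:ℝ) + 1)^2 * Real.log n + 1) :=
          Finset.sum_le_sum fun x _ => hr x.1 x.2
      _ = ∑ c ∈ Finset.Icc 1 k, (Real.exp 1 * ((k:ℝ)/c + 1)^2 * Real.log n + 1) :=
          Finset.sum_attach (Finset.Icc 1 k)
            (fun c => Real.exp 1 * ((k:ℝ)/(c:ℝ) + 1)^2 * Real.log n + 1)
  -- arithmetic
  have hB : ∑ c ∈ Finset.Icc 1 k, (1:ℝ)/((c:ℝ))^2 < Real.pi^2/6 := by
    have hsummable : Summable (fun j : ℕ => (1:ℝ)/(j:ℝ)^2) := hasSum_zeta_two.summable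
    have hle := Summable.sum_le_tsum (f := fun j : ℕ => (1:ℝ)/(j:ℝ)^2) (Finset.Icc 1 (k+1))
      (fun i _ => by positivity) hsummable
    rw [hasSum_zeta_two.tsum_eq] at hle
    have hsplit : ∑ c ∈ Finset.Icc 1 (k+1), (1:ℝ)/((c:ℝ))^2
        = ∑ c ∈ Finset.Icc 1 k, (1:ℝ)/((c:ℝ))^2 + (1:ℝ)/(((k+1:ℕ)):ℝ)^2 := by
      rw [Finset.sum_Icc_succ_top (by omega : 1 ≤ k + 1)]
    have hpos : (0:ℝ) < (1:ℝ)/(((k+1:ℕ)):ℝ)^2 := by positivity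
    rw [hsplit] at hle
    linarith
  have hH : ∑ c ∈ Finset.Icc 1 k, (1:ℝ)/(c:ℝ) ≤ 1 + Real.log k := by
    have h1 : ∑ c ∈ Finset.Icc 1 k, (1:ℝ)/(c:ℝ) = ((harmonic k : ℚ) : ℝ) := by
      rw [harmonic_eq_sum_Icc]
      push_cast
      simp [one_div]
    rw [h1]
    exact harmonic_le_one_add_log k
  have hkcard : ((Finset.Icc 1 k).card : ℝ) = (k : ℝ) := by
    rw [Nat.card_Icc]
    norm_num
  have hS : ∑ c ∈ Finset.Icc 1 k, ((k:ℝ)/c + 1)^2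
      < Real.pi^2/6 * (k:ℝ)^2 + 2*(k:ℝ)*Real.log k + 3*(k:ℝ) := by
    have hterm : ∀ c ∈ Finset.Icc 1 k, ((k:ℝ)/c + 1)^2
        = (k:ℝ)^2 * ((1:ℝ)/((c:ℝ))^2) + 2*(k:ℝ)*((1:ℝ)/(c:ℝ)) + 1 := by
      intro c hc
      have hc1 : 1 ≤ c := (Finset.mem_Icc.mp hc).1
      have hc0 : ((c:ℝ)) ≠ 0 := by
        have : (0:ℝ) < (c:ℝ) := by exact_mod_cast hc1
        linarith
      field_simp
      ring
    have hexp : ∑ c ∈ Finset.Icc 1 k, ((k:ℝ)/c + 1)^2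
        = (k:ℝ)^2 * (∑ c ∈ Finset.Icc 1 k, (1:ℝ)/((c:ℝ))^2)
          + 2*(k:ℝ) * (∑ c ∈ Finset.Icc 1 k, (1:ℝ)/(c:ℝ))
          + (k:ℝ) := by
      rw [Finset.sum_congr rfl hterm, Finset.sum_add_distrib, Finset.sum_add_distrib,
        ← Finset.mul_sum, ← Finset.mul_sum, Finset.sum_const, nsmul_eq_mul, hkcard, mul_one]
    rw [hexp]
    nlinarith [hB, hH, hkR, sq_nonneg (k:ℝ), mul_pos hkR hkR]
  -- combine
  have hsum2 : ∑ c ∈ Finset.Icc 1 k, (Real.exp 1 * ((k:ℝ)/c + 1)^2 * Real.log n + 1)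
      = (Real.exp 1 * Real.log n) * (∑ c ∈ Finset.Icc 1 k, ((k:ℝ)/c + 1)^2) + (k:ℝ) := by
    rw [Finset.sum_add_distrib, Finset.sum_const, nsmul_eq_mul, hkcard, mul_one,
      Finset.mul_sum]
    congr 1
    exact Finset.sum_congr rfl fun c _ => by ring
  calc (dim2 P : ℝ) ≤ (Fintype.card ι : ℝ) := by exact_mod_cast hdim
    _ ≤ ∑ c ∈ Finset.Icc 1 k, (Real.exp 1 * ((k:ℝ)/c + 1)^2 * Real.log n + 1) := hsum
    _ = (Real.exp 1 * Real.log n) * (∑ c ∈ Finset.Icc 1 k, ((k:ℝ)/c + 1)^2) + (k:ℝ) := hsum2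
    _ < (Real.exp 1 * Real.log n)
          * (Real.pi^2/6 * (k:ℝ)^2 + 2*(k:ℝ)*Real.log k + 3*(k:ℝ)) + (k:ℝ) := by
        have hml := mul_lt_mul_of_pos_left hS (mul_pos (Real.exp_pos 1) hlogn)
        linarith
    _ = Real.exp 1 * (Real.pi ^ 2 / 6 * (k : ℝ) ^ 2 + 2 * k * Real.log k + 3 * k)
          * Real.log n + k := by ring
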